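/- For λ > 0, the series ζ_λ(s) := (1 + √λ)^{−s} + 2 Σ_{k=1}^∞ (λ + k²)^{−s/2} converges absolutely for Re(s) > 1, and for each λ > 0 there exist ε > 0 and a holomorphic function F_λ on {s ∈ ℂ : Re(s) > −ε} \ {1} agreeing with ζ_λ on {Re(s) > 1}. Moreover the function G(λ) := −F_λ′(0) is differentiable on (0, ∞) with G′(λ) = 1/(2√λ(1 + √λ)) + Σ_{k=1}^∞ 1/(λ + k²). -/

import Mathlib

open Complex Filter Set Topology

namespace DNZeta

/-- `A_k(λ) = λ + (k+1)^2`. -/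
noncomputable def Ak (lam : ℝ) (k : ℕ) : ℝ := lam + ((k : ℝ) + 1) ^ 2

/-- `B_k = (k+1)^2`. -/
noncomputable def Bk (k : ℕ) : ℝ := ((k : ℝ) + 1) ^ 2

lemma Bk_pos (k : ℕ) : 0 < Bk k := by
  have : (0:ℝ) < (k : ℝ) + 1 := by positivity
  simp only [Bk]; positivity

lemma one_le_Bk (k : ℕ) : 1 ≤ Bk k := by
  have h : (1 : ℝ) ≤ (k : ℝ) + 1 := by simp
  simp only [Bk]; nlinarith

lemma Ak_pos {lam : ℝ} (hl : 0 < lam) (k : ℕ) : 0 < Ak lam k := by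
  have := Bk_pos k; simp only [Ak, Bk] at *; linarith

lemma Bk_le_Ak {lam : ℝ} (hl : 0 < lam) (k : ℕ) : Bk k ≤ Ak lam k := by
  simp only [Ak, Bk]; linarith

/-- The regularized term of the zeta series. -/
noncomputable def zterm (lam : ℝ) (k : ℕ) (s : ℂ) : ℂ :=
  Complex.exp ((-s / 2) * Real.log (Ak lam k)) - Complex.exp ((-s / 2) * Real.log (Bk k))

/-- The analytic continuation. -/
noncomputable def Fz (lam : ℝ) (s : ℂ) : ℂ :=
  ((1 + Real.sqrt lam : ℝ) : ℂ) ^ (-s) + 2 * riemannZeta s + 2 * ∑' k, zterm lam k s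

lemma cpow_real_eq {x : ℝ} (hx : 0 < x) (z : ℂ) :
    ((x : ℝ) : ℂ) ^ z = Complex.exp (z * Real.log x) := by
  rw [Complex.cpow_def_of_ne_zero (Complex.ofReal_ne_zero.mpr hx.ne'),
    Complex.ofReal_log hx.le, mul_comm]

lemma norm_exp_mul_log {x : ℝ} (hx : 0 < x) (w : ℂ) :
    ‖Complex.exp (w * Real.log x)‖ = x ^ w.re := by
  rw [Complex.norm_exp, Real.rpow_def_of_pos hx]
  norm_num [mul_comm]

/-- Mean value bound for differences of exponentials with real logs. -/
lemma exp_diff_bound {B A : ℝ} (hB : 1 ≤ B) (hAB : B ≤ A) {w : ℂ} (hw : w.re ≤ 1 / 2) :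
    ‖Complex.exp (w * Real.log A) - Complex.exp (w * Real.log B)‖ ≤
      ‖w‖ * (Real.log A - Real.log B) * Real.exp ((Real.log A - Real.log B) / 2) *
        B ^ w.re := by
  have hB0 : (0 : ℝ) < B := lt_of_lt_of_le one_pos hB
  have hA0 : (0 : ℝ) < A := lt_of_lt_of_le hB0 hAB
  set D : ℝ := Real.log A - Real.log B with hD
  have hD0 : 0 ≤ D := sub_nonneg.mpr (Real.log_le_log hB0 hAB)
  set φ : ℝ → ℂ := fun t => Complex.exp (w * (Real.log B + t * D)) with hφ
  set C : ℝ := ‖w‖ * D * Real.exp (D / 2) * B ^ w.re with hC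
  have hder : ∀ t ∈ Set.Icc (0 : ℝ) 1,
      HasDerivWithinAt φ (w * D * φ t) (Set.Icc 0 1) t := by
    intro t _
    have h1 : HasDerivAt (fun z : ℂ => Complex.exp (w * (Real.log B + z * D)))
        (w * D * Complex.exp (w * (Real.log B + (t : ℂ) * D))) (t : ℂ) := by
      have hin : HasDerivAt (fun z : ℂ => w * (Real.log B + z * D)) (w * D) (t : ℂ) := by
        simpa using (((hasDerivAt_id (t : ℂ)).mul_const ((D : ℝ) : ℂ)).const_add
          ((Real.log B : ℝ) : ℂ)).const_mul w
      exact hin.cexp.congr_deriv (by ring)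
    exact (h1.comp_ofReal).hasDerivWithinAt
  have hbound : ∀ t ∈ Set.Ico (0 : ℝ) 1, ‖w * D * φ t‖ ≤ C := by
    intro t ht
    have hφn : ‖φ t‖ = Real.exp (w.re * Real.log B + t * (w.re * D)) := by
      rw [hφ]
      simp only [Complex.norm_exp]
      congr 1
      simp [Complex.mul_re, Complex.add_re, Complex.ofReal_re, Complex.ofReal_im,
        Complex.mul_im]
      ring
    have h2 : t * (w.re * D) ≤ D / 2 := by
      rcases le_or_gt w.re 0 with h | h
      · have h4 : w.re * D ≤ 0 := mul_nonpos_of_nonpos_of_nonneg h hD0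
        have h6 := mul_nonpos_of_nonneg_of_nonpos ht.1 h4
        have h7 : (0:ℝ) ≤ D / 2 := by linarith
        exact h6.trans h7
      · have h4 : t * (w.re * D) ≤ w.re * D :=
          mul_le_of_le_one_left (by positivity) ht.2.le
        have h5 : w.re * D ≤ (1 / 2) * D := mul_le_mul_of_nonneg_right hw hD0
        calc t * (w.re * D) ≤ w.re * D := h4
          _ ≤ (1 / 2) * D := h5
          _ = D / 2 := by ring
    have h3 : ‖φ t‖ ≤ B ^ w.re * Real.exp (D / 2) := by
      rw [hφn, Real.rpow_def_of_pos hB0, ← Real.exp_add]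
      exact Real.exp_le_exp.mpr (by linarith)
    calc ‖w * D * φ t‖ = ‖w‖ * D * ‖φ t‖ := by
          rw [norm_mul, norm_mul, Complex.norm_real, Real.norm_eq_abs,
            _root_.abs_of_nonneg hD0]
      _ ≤ ‖w‖ * D * (B ^ w.re * Real.exp (D / 2)) := by
          apply mul_le_mul_of_nonneg_left h3; positivity
      _ = C := by rw [hC]; ring
  have key := norm_image_sub_le_of_norm_deriv_le_segment' hder hbound 1
    (Set.right_mem_Icc.mpr zero_le_one)
  have h0 : φ 0 = Complex.exp (w * Real.log B) := by simp [hφ]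
  have h1 : φ 1 = Complex.exp (w * Real.log A) := by
    simp only [hφ, one_mul]
    congr 2
    push_cast [hD]
    ring
  rw [h0, h1] at key
  simpa [hC] using key


lemma neg_div_two_re (s : ℂ) : (-s / 2).re = -s.re / 2 := by
  simp [Complex.div_re]

lemma log_div_le {lam : ℝ} (hl : 0 < lam) (k : ℕ) :
    Real.log (Ak lam k) - Real.log (Bk k) ≤ lam / Bk k := by
  have hB := Bk_pos k
  have hA := Ak_pos hl k
  have h1 : Real.log (Ak lam k) - Real.log (Bk k) = Real.log (Ak lam k / Bk k) :=
    (Real.log_div hA.ne' hB.ne').symm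
  have h2 : Real.log (Ak lam k / Bk k) ≤ Ak lam k / Bk k - 1 :=
    Real.log_le_sub_one_of_pos (by positivity)
  have h3 : Ak lam k / Bk k - 1 = lam / Bk k := by
    field_simp [Ak, Bk]
    unfold Ak Bk; ring
  rw [h1]; rw [h3] at h2; exact h2

lemma zterm_bound {lam a W : ℝ} (hl : 0 < lam) (ha : -1 ≤ a) (k : ℕ) {s : ℂ}
    (hsre : a ≤ s.re) (hsn : ‖s‖ ≤ W) :
    ‖zterm lam k s‖ ≤
      W / 2 * lam * Real.exp (lam / 2) * ((k : ℝ) + 1) ^ (-(2 + a)) := by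
  have hB := Bk_pos k
  have hb : (0 : ℝ) < (k : ℝ) + 1 := by positivity
  set w : ℂ := -s / 2 with hwdef
  have hwre : w.re = -s.re / 2 := neg_div_two_re s
  have hw2 : w.re ≤ 1 / 2 := by rw [hwre]; linarith
  have hwa : w.re ≤ -a / 2 := by rw [hwre]; linarith
  have hW0 : (0:ℝ) ≤ W := (norm_nonneg s).trans hsn
  have hwn : ‖w‖ ≤ W / 2 := by
    have he : ‖w‖ = ‖s‖ / 2 := by
      rw [hwdef, norm_div, norm_neg]; simp
    rw [he]; linarith
  set D : ℝ := Real.log (Ak lam k) - Real.log (Bk k) with hDdef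
  have hD0 : 0 ≤ D := sub_nonneg.mpr (Real.log_le_log hB (Bk_le_Ak hl k))
  have hDle : D ≤ lam / Bk k := log_div_le hl k
  have hDlam : D ≤ lam := hDle.trans (by
    rw [div_le_iff₀ hB]
    nlinarith [one_le_Bk k, hl.le])
  have key := exp_diff_bound (one_le_Bk k) (Bk_le_Ak hl k) hw2
  have step : ‖w‖ * D * Real.exp (D / 2) * Bk k ^ w.re ≤
      W / 2 * (lam / Bk k) * Real.exp (lam / 2) * Bk k ^ (-a / 2) := by
    have hwn0 : (0:ℝ) ≤ ‖w‖ := norm_nonneg w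
    gcongr
    all_goals first | exact one_le_Bk k | linarith
  have eqn : W / 2 * (lam / Bk k) * Real.exp (lam / 2) * Bk k ^ (-a / 2) =
      W / 2 * lam * Real.exp (lam / 2) * ((k : ℝ) + 1) ^ (-(2 + a)) := by
    have h1 : Bk k = ((k : ℝ) + 1) ^ (2 : ℝ) := by
      rw [Bk]
      rw [show ((2:ℝ)) = ((2:ℕ):ℝ) by norm_num, Real.rpow_natCast]
    have h2 : Bk k ^ (-a / 2) = ((k : ℝ) + 1) ^ (-a) := by
      rw [h1, ← Real.rpow_mul hb.le]
      congr 1; ring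
    have h3 : (Bk k)⁻¹ = ((k : ℝ) + 1) ^ (-2 : ℝ) := by
      rw [h1, ← Real.rpow_neg hb.le]
    have h4 : lam / Bk k = lam * ((k : ℝ) + 1) ^ (-2 : ℝ) := by
      rw [div_eq_mul_inv, h3]
    rw [h2, h4]
    rw [show W / 2 * (lam * ((k:ℝ)+1) ^ (-2:ℝ)) * Real.exp (lam / 2) * ((k:ℝ)+1) ^ (-a) =
      W / 2 * lam * Real.exp (lam / 2) * (((k:ℝ)+1) ^ (-2:ℝ) * ((k:ℝ)+1) ^ (-a)) by ring]
    rw [← Real.rpow_add hb]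
    congr 1; ring
  calc ‖zterm lam k s‖ ≤ ‖w‖ * D * Real.exp (D / 2) * Bk k ^ w.re := key
    _ ≤ W / 2 * (lam / Bk k) * Real.exp (lam / 2) * Bk k ^ (-a / 2) := step
    _ = _ := eqn

lemma summable_pow_neg {p : ℝ} (hp : p < -1) :
    Summable (fun k : ℕ => ((k : ℝ) + 1) ^ p) := by
  have h := Real.summable_nat_rpow.mpr hp
  have h2 := (summable_nat_add_iff 1).mpr h
  refine h2.congr fun n => ?_
  push_cast
  rfl

lemma summable_zterm_bound {lam a W : ℝ} (ha : -1 < a) :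
    Summable (fun k : ℕ => W / 2 * lam * Real.exp (lam / 2) * ((k : ℝ) + 1) ^ (-(2 + a))) :=
  (summable_pow_neg (by linarith)).mul_left _

lemma exp_term_hasDerivAt (c : ℝ) (s : ℂ) :
    HasDerivAt (fun z : ℂ => Complex.exp (-z / 2 * c))
      (-c / 2 * Complex.exp (-s / 2 * c)) s := by
  have hin : HasDerivAt (fun z : ℂ => -z / 2 * (c : ℂ)) (-c / 2) s := by
    have h := (((hasDerivAt_id s).neg.div_const 2).mul_const ((c : ℝ) : ℂ))
    exact h.congr_deriv (by ring)
  exact hin.cexp.congr_deriv (by ring)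

lemma zterm_differentiable (lam : ℝ) (k : ℕ) : Differentiable ℂ (zterm lam k) :=
  fun s => (((exp_term_hasDerivAt (Real.log (Ak lam k)) s).sub
    (exp_term_hasDerivAt (Real.log (Bk k)) s)).differentiableAt)

/-- `d/ds zterm` at `s = 0`. -/
noncomputable def dterm (lam : ℝ) (k : ℕ) : ℝ :=
  (Real.log (Bk k) - Real.log (Ak lam k)) / 2

lemma zterm_hasDerivAt_zero (lam : ℝ) (k : ℕ) :
    HasDerivAt (zterm lam k) ((dterm lam k : ℝ) : ℂ) 0 := by
  have h := (exp_term_hasDerivAt (Real.log (Ak lam k)) 0).sub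
    (exp_term_hasDerivAt (Real.log (Bk k)) 0)
  have e : (-(Real.log (Ak lam k) : ℂ) / 2 * Complex.exp (-0 / 2 * Real.log (Ak lam k)) -
      -(Real.log (Bk k)) / 2 * Complex.exp (-0 / 2 * Real.log (Bk k))) =
      ((dterm lam k : ℝ) : ℂ) := by
    simp [dterm]
    ring
  rw [e] at h
  exact h


lemma log_Bk (k : ℕ) : Real.log (Bk k) = 2 * Real.log ((k : ℝ) + 1) := by
  rw [Bk, Real.log_pow]; push_cast; ring

lemma cpowA_eq {lam : ℝ} (hl : 0 < lam) (k : ℕ) (s : ℂ) :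
    ((lam + ((k : ℝ) + 1) ^ 2 : ℝ) : ℂ) ^ (-s / 2) =
      Complex.exp ((-s / 2) * Real.log (Ak lam k)) :=
  cpow_real_eq (Ak_pos hl k) _

lemma cpowB_eq (k : ℕ) (s : ℂ) :
    ((((k : ℝ) + 1) : ℝ) : ℂ) ^ (-s) = Complex.exp ((-s / 2) * Real.log (Bk k)) := by
  have hb : (0 : ℝ) < (k : ℝ) + 1 := by positivity
  rw [cpow_real_eq hb (-s), log_Bk]
  push_cast
  ring_nf

lemma norm_cpowA {lam : ℝ} (hl : 0 < lam) (k : ℕ) {s : ℂ} (hs : 0 ≤ s.re) :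
    ‖((lam + ((k : ℝ) + 1) ^ 2 : ℝ) : ℂ) ^ (-s / 2)‖ ≤ ((k : ℝ) + 1) ^ (-s.re) := by
  have hb : (0 : ℝ) < (k : ℝ) + 1 := by positivity
  rw [cpowA_eq hl, norm_exp_mul_log (Ak_pos hl k), neg_div_two_re]
  calc Ak lam k ^ (-s.re / 2) ≤ Bk k ^ (-s.re / 2) :=
        Real.rpow_le_rpow_of_nonpos (Bk_pos k) (Bk_le_Ak hl k) (by linarith)
    _ = ((k : ℝ) + 1) ^ (-s.re) := by
        rw [Bk, show (((k:ℝ)+1)^2) = ((k:ℝ)+1) ^ (2:ℝ) by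
          rw [show ((2:ℝ)) = ((2:ℕ):ℝ) by norm_num, Real.rpow_natCast],
          ← Real.rpow_mul hb.le]
        congr 1; ring

/-- Part 1 : absolute convergence for `Re s > 1`. -/
lemma summable_norm_cpowA {lam : ℝ} (hl : 0 < lam) {s : ℂ} (hs : 1 < s.re) :
    Summable (fun k : ℕ => ‖((lam + ((k : ℝ) + 1) ^ 2 : ℝ) : ℂ) ^ (-s / 2)‖) :=
  Summable.of_nonneg_of_le (fun _ => norm_nonneg _) (fun k => norm_cpowA hl k (by linarith))
    (summable_pow_neg (by linarith))

lemma summable_zterm {lam : ℝ} (hl : 0 < lam) {s : ℂ} (hs : -1 < s.re) :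
    Summable (fun k : ℕ => zterm lam k s) := by
  apply Summable.of_norm
  refine Summable.of_nonneg_of_le (fun _ => norm_nonneg _)
    (fun k => zterm_bound hl (a := (s.re - 1) / 2) (W := ‖s‖) (by linarith) k
      (by linarith) le_rfl) ?_
  exact summable_zterm_bound (by linarith)

lemma T_differentiableAt {lam : ℝ} (hl : 0 < lam) {s0 : ℂ} (h : -(1 : ℝ)/2 < s0.re) :
    DifferentiableAt ℂ (fun s => ∑' k, zterm lam k s) s0 := by
  set r : ℝ := (s0.re + 1) / 2 with hr
  have hr0 : 0 < r := by rw [hr]; linarith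
  set a : ℝ := s0.re - r with ha
  have ha1 : -1 < a := by rw [ha, hr]; linarith
  set W : ℝ := ‖s0‖ + r with hW
  have hmem : ∀ w ∈ Metric.ball s0 r, a ≤ w.re ∧ ‖w‖ ≤ W := by
    intro w hw
    rw [Metric.mem_ball, dist_eq_norm] at hw
    constructor
    · have := Complex.abs_re_le_norm (w - s0)
      rw [Complex.sub_re] at this
      have h2 : |w.re - s0.re| ≤ ‖w - s0‖ := this
      have := abs_le.mp h2
      rw [ha]; linarith
    · calc ‖w‖ = ‖s0 + (w - s0)‖ := by ring_nf
        _ ≤ ‖s0‖ + ‖w - s0‖ := norm_add_le _ _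
        _ ≤ W := by rw [hW]; linarith
  have hd := differentiableOn_tsum_of_summable_norm
    (summable_zterm_bound (lam := lam) (W := W) ha1)
    (fun k => (zterm_differentiable lam k).differentiableOn)
    Metric.isOpen_ball
    (fun k w hw => zterm_bound hl ha1.le k (hmem w hw).1 (hmem w hw).2)
  exact (hd.differentiableAt (Metric.isOpen_ball.mem_nhds (Metric.mem_ball_self hr0)))

lemma T_hasSum_deriv {lam : ℝ} (hl : 0 < lam) :
    HasSum (fun k : ℕ => ((dterm lam k : ℝ) : ℂ))
      (deriv (fun s => ∑' k, zterm lam k s) 0) := by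
  have hmem : ∀ w ∈ Metric.ball (0 : ℂ) (1/4), (-(1:ℝ)/4) ≤ w.re ∧ ‖w‖ ≤ 1/4 := by
    intro w hw
    rw [Metric.mem_ball, dist_zero_right] at hw
    have h2 : |w.re| ≤ ‖w‖ := by
      exact Complex.abs_re_le_norm w
    constructor
    · have := abs_le.mp h2
      linarith
    · exact hw.le
  have hs := hasSum_deriv_of_summable_norm
    (summable_zterm_bound (lam := lam) (W := 1/4) (a := -(1:ℝ)/4) (by norm_num))
    (fun k => (zterm_differentiable lam k).differentiableOn)
    Metric.isOpen_ball
    (fun k w hw => zterm_bound hl (by norm_num) k (hmem w hw).1 (hmem w hw).2)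
    (Metric.mem_ball_self (by norm_num : (0:ℝ) < 1/4))
  have e : (fun k : ℕ => ((dterm lam k : ℝ) : ℂ)) = fun i => deriv (zterm lam i) 0 := by
    funext k
    exact ((zterm_hasDerivAt_zero lam k).deriv).symm
  rw [e]; exact hs


lemma Bk_rpow (k : ℕ) (x : ℝ) : Bk k ^ x = ((k : ℝ) + 1) ^ (2 * x) := by
  have hb : (0 : ℝ) ≤ (k : ℝ) + 1 := by positivity
  rw [Bk, show (((k:ℝ)+1)^2) = ((k:ℝ)+1) ^ (2:ℝ) by
    rw [show ((2:ℝ)) = ((2:ℕ):ℝ) by norm_num, Real.rpow_natCast],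
    ← Real.rpow_mul hb]

lemma summable_expB {s : ℂ} (hs : 1 < s.re) :
    Summable (fun k : ℕ => Complex.exp ((-s / 2) * Real.log (Bk k))) := by
  apply Summable.of_norm
  refine Summable.of_nonneg_of_le (fun _ => norm_nonneg _) (fun k => ?_)
    (summable_pow_neg (p := -s.re) (by linarith))
  rw [norm_exp_mul_log (Bk_pos k), neg_div_two_re, Bk_rpow]
  apply le_of_eq
  congr 1
  ring

lemma zeta_eq_tsum_expB {s : ℂ} (hs : 1 < s.re) :
    riemannZeta s = ∑' k : ℕ, Complex.exp ((-s / 2) * Real.log (Bk k)) := by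
  rw [zeta_eq_tsum_one_div_nat_add_one_cpow hs]
  apply tsum_congr
  intro k
  rw [← cpowB_eq k s]
  have hcast : ((k : ℂ) + 1) = ((((k : ℝ) + 1) : ℝ) : ℂ) := by push_cast; ring
  rw [one_div, ← Complex.cpow_neg, hcast]

lemma Fz_eq_series {lam : ℝ} (hl : 0 < lam) {s : ℂ} (hs : 1 < s.re) :
    Fz lam s = ((1 + Real.sqrt lam : ℝ) : ℂ) ^ (-s) +
      2 * ∑' k : ℕ, ((lam + ((k : ℝ) + 1) ^ 2 : ℝ) : ℂ) ^ (-s / 2) := by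
  have hA : Summable (fun k : ℕ => ((lam + ((k : ℝ) + 1) ^ 2 : ℝ) : ℂ) ^ (-s / 2)) :=
    (summable_norm_cpowA hl hs).of_norm
  have hA' : Summable (fun k : ℕ => Complex.exp ((-s / 2) * Real.log (Ak lam k))) :=
    hA.congr fun k => cpowA_eq hl k s
  have hB := summable_expB hs
  have hsub : ∑' k, zterm lam k s =
      (∑' k : ℕ, Complex.exp ((-s / 2) * Real.log (Ak lam k))) -
        ∑' k : ℕ, Complex.exp ((-s / 2) * Real.log (Bk k)) := by
    rw [← Summable.tsum_sub hA' hB]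
    rfl
  have hAA : ∑' k : ℕ, Complex.exp ((-s / 2) * Real.log (Ak lam k)) =
      ∑' k : ℕ, ((lam + ((k : ℝ) + 1) ^ 2 : ℝ) : ℂ) ^ (-s / 2) :=
    tsum_congr fun k => (cpowA_eq hl k s).symm
  unfold Fz
  rw [hsub, hAA, zeta_eq_tsum_expB hs]
  ring

lemma Fz_differentiableOn {lam : ℝ} (hl : 0 < lam) :
    DifferentiableOn ℂ (Fz lam) ({s : ℂ | -(1 / 2 : ℝ) < s.re} \ {1}) := by
  intro s hs
  obtain ⟨hs1, hs2⟩ := hs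
  apply DifferentiableAt.differentiableWithinAt
  have hne : ((1 + Real.sqrt lam : ℝ) : ℂ) ≠ 0 := by
    have : (0 : ℝ) < 1 + Real.sqrt lam := by positivity
    exact_mod_cast Complex.ofReal_ne_zero.mpr this.ne'
  have h1 : DifferentiableAt ℂ (fun z : ℂ => ((1 + Real.sqrt lam : ℝ) : ℂ) ^ (-z)) s :=
    differentiableAt_id.neg.const_cpow (Or.inl hne)
  have h2 : DifferentiableAt ℂ riemannZeta s := differentiableAt_riemannZeta hs2
  have h3 : DifferentiableAt ℂ (fun z => ∑' k, zterm lam k z) s :=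
    T_differentiableAt hl (by simpa [neg_div] using hs1)
  exact (h1.add (h2.const_mul 2)).add (h3.const_mul 2)

lemma Fz_deriv_zero {m : ℝ} (hm : 0 < m) :
    deriv (Fz m) 0 = -((Real.log (1 + Real.sqrt m) : ℝ) : ℂ) +
      2 * deriv riemannZeta 0 + 2 * ∑' k : ℕ, ((dterm m k : ℝ) : ℂ) := by
  have hc : (0 : ℝ) < 1 + Real.sqrt m := by positivity
  have h1 : HasDerivAt (fun z : ℂ => ((1 + Real.sqrt m : ℝ) : ℂ) ^ (-z))
      (-((Real.log (1 + Real.sqrt m) : ℝ) : ℂ)) 0 := by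
    have heq : (fun z : ℂ => ((1 + Real.sqrt m : ℝ) : ℂ) ^ (-z)) =
        fun z : ℂ => Complex.exp (-z / 2 * ((2 * Real.log (1 + Real.sqrt m) : ℝ) : ℂ)) := by
      funext z
      rw [cpow_real_eq hc (-z)]
      congr 1
      push_cast
      ring
    rw [heq]
    have h := exp_term_hasDerivAt (2 * Real.log (1 + Real.sqrt m)) 0
    have e : (-((2 * Real.log (1 + Real.sqrt m) : ℝ) : ℂ) / 2 *
        Complex.exp (-0 / 2 * ((2 * Real.log (1 + Real.sqrt m) : ℝ) : ℂ))) =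
        -((Real.log (1 + Real.sqrt m) : ℝ) : ℂ) := by
      push_cast
      simp
      ring
    rw [e] at h
    exact h
  have h2 : HasDerivAt riemannZeta (deriv riemannZeta 0) 0 :=
    (differentiableAt_riemannZeta (by norm_num)).hasDerivAt
  have h3 : HasDerivAt (fun z => ∑' k, zterm m k z)
      (∑' k : ℕ, ((dterm m k : ℝ) : ℂ)) 0 := by
    rw [(T_hasSum_deriv hm).tsum_eq]
    exact (T_differentiableAt hm (by norm_num)).hasDerivAt
  have : HasDerivAt (Fz m)
      (-((Real.log (1 + Real.sqrt m) : ℝ) : ℂ) + 2 * deriv riemannZeta 0 +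
        2 * ∑' k : ℕ, ((dterm m k : ℝ) : ℂ)) 0 := by
    unfold Fz
    exact (h1.add (h2.const_mul 2)).add (h3.const_mul 2)
  exact this.deriv


lemma rpow_neg_two (k : ℕ) : ((k : ℝ) + 1) ^ (-2 : ℝ) = (Bk k)⁻¹ := by
  have hb : (0 : ℝ) ≤ (k : ℝ) + 1 := by positivity
  rw [Real.rpow_neg hb, show ((2:ℝ)) = ((2:ℕ):ℝ) by norm_num, Real.rpow_natCast, Bk]

lemma summable_one_div_sq {m : ℝ} (hm : 0 < m) :
    Summable (fun k : ℕ => 1 / (m + ((k : ℝ) + 1) ^ 2)) := by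
  refine Summable.of_nonneg_of_le (fun k => by positivity) (fun k => ?_)
    (summable_pow_neg (p := -2) (by norm_num))
  rw [rpow_neg_two, one_div]
  apply inv_anti₀ (Bk_pos k)
  simp only [Bk]
  linarith

lemma summable_dterm {m : ℝ} (hm : 0 < m) : Summable (fun k : ℕ => dterm m k) := by
  have h1 : Summable (fun k : ℕ => (Real.log (Ak m k) - Real.log (Bk k)) / 2) := by
    refine Summable.of_nonneg_of_le (fun k => ?_) (fun k => ?_)
      (((summable_pow_neg (p := -2) (by norm_num)).mul_left (m / 2)))
    · have := Real.log_le_log (Bk_pos k) (Bk_le_Ak hm k)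
      linarith
    · have h2 := log_div_le hm k
      rw [rpow_neg_two]
      have h3 : m / Bk k = m * (Bk k)⁻¹ := div_eq_mul_inv _ _
      have h4 : (0:ℝ) < Bk k := Bk_pos k
      calc (Real.log (Ak m k) - Real.log (Bk k)) / 2 ≤ (m / Bk k) / 2 := by linarith
        _ = m / 2 * (Bk k)⁻¹ := by rw [h3]; ring
  exact (h1.neg).congr fun k => by rw [dterm]; ring

lemma dterm_hasDerivAt {m : ℝ} (hm : 0 < m) (k : ℕ) :
    HasDerivAt (fun x : ℝ => ((dterm x k : ℝ) : ℂ))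
      (((-(1 / (2 * (m + ((k : ℝ) + 1) ^ 2))) : ℝ) : ℂ)) m := by
  have hpos : (0:ℝ) < m + ((k : ℝ) + 1) ^ 2 := by positivity
  have hinner : HasDerivAt (fun x : ℝ => x + ((k : ℝ) + 1) ^ 2) 1 m :=
    (hasDerivAt_id m).add_const _
  have hlog : HasDerivAt (fun x : ℝ => Real.log (x + ((k : ℝ) + 1) ^ 2))
      (1 / (m + ((k : ℝ) + 1) ^ 2)) m := by
    simpa using hinner.log hpos.ne'
  have hreal : HasDerivAt (fun x : ℝ => dterm x k)
      (-(1 / (2 * (m + ((k : ℝ) + 1) ^ 2)))) m := by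
    have h := (hlog.const_sub (Real.log (Bk k))).div_const 2
    have heq : (fun x : ℝ => (Real.log (Bk k) - Real.log (x + ((k : ℝ) + 1) ^ 2)) / 2) =
        fun x : ℝ => dterm x k := by
      funext x; rw [dterm, Ak]
    rw [heq] at h
    exact h.congr_deriv (by rw [one_div, one_div, mul_inv]; ring)
  exact hreal.ofReal_comp

lemma tsum_dterm_hasDerivAt {lam : ℝ} (hl : 0 < lam) :
    HasDerivAt (fun m : ℝ => ∑' k : ℕ, ((dterm m k : ℝ) : ℂ))
      (∑' k : ℕ, ((-(1 / (2 * (lam + ((k : ℝ) + 1) ^ 2))) : ℝ) : ℂ)) lam := by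
  have hu : Summable (fun k : ℕ => (1 / 2 : ℝ) * ((k : ℝ) + 1) ^ (-2 : ℝ)) :=
    (summable_pow_neg (by norm_num)).mul_left _
  refine hasDerivAt_of_tendstoUniformlyOn (l := Filter.atTop) isOpen_Ioi
    (f := fun N (m : ℝ) => ∑ k ∈ Finset.range N, ((dterm m k : ℝ) : ℂ))
    (f' := fun N (m : ℝ) =>
      ∑ k ∈ Finset.range N, ((-(1 / (2 * (m + ((k : ℝ) + 1) ^ 2))) : ℝ) : ℂ))
    (g := fun m : ℝ => ∑' k : ℕ, ((dterm m k : ℝ) : ℂ))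
    (g' := fun m : ℝ => ∑' k : ℕ, ((-(1 / (2 * (m + ((k : ℝ) + 1) ^ 2))) : ℝ) : ℂ))
    ?_ ?_ ?_ (Set.mem_Ioi.mpr hl)
  · apply tendstoUniformlyOn_tsum_nat hu
    intro k m hm
    rw [Set.mem_Ioi] at hm
    have hpos : (0:ℝ) < m + ((k : ℝ) + 1) ^ 2 := by positivity
    rw [Complex.norm_real, Real.norm_eq_abs, abs_neg, _root_.abs_of_nonneg (by positivity)]
    rw [rpow_neg_two]
    have hB := Bk_pos k
    rw [one_div]
    have h1 : (2 * (m + ((k : ℝ) + 1) ^ 2))⁻¹ ≤ (2 * Bk k)⁻¹ := by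
      apply inv_anti₀ (by positivity)
      simp only [Bk]
      linarith
    calc (2 * (m + ((k : ℝ) + 1) ^ 2))⁻¹ ≤ (2 * Bk k)⁻¹ := h1
      _ = 1 / 2 * (Bk k)⁻¹ := by rw [mul_inv]; ring
  · filter_upwards with N
    intro m hm
    rw [Set.mem_Ioi] at hm
    exact HasDerivAt.fun_sum fun k _ => dterm_hasDerivAt hm k
  · intro m hm
    rw [Set.mem_Ioi] at hm
    have hsm : Summable (fun k : ℕ => ((dterm m k : ℝ) : ℂ)) :=
      Complex.summable_ofReal.mpr (summable_dterm hm)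
    exact hsm.hasSum.tendsto_sum_nat

/-- The explicit formula for `G = -F'(0)`. -/
noncomputable def Gex (m : ℝ) : ℂ :=
  ((Real.log (1 + Real.sqrt m) : ℝ) : ℂ) - 2 * deriv riemannZeta 0 -
    2 * ∑' k : ℕ, ((dterm m k : ℝ) : ℂ)

lemma Gex_hasDerivAt {lam : ℝ} (hl : 0 < lam) :
    HasDerivAt Gex
      (((1 / (2 * Real.sqrt lam * (1 + Real.sqrt lam)) +
        ∑' k : ℕ, 1 / (lam + ((k : ℝ) + 1) ^ 2) : ℝ)) : ℂ) lam := by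
  have hs : 0 < Real.sqrt lam := Real.sqrt_pos.mpr hl
  have hsq : HasDerivAt (fun m : ℝ => 1 + Real.sqrt m) (1 / (2 * Real.sqrt lam)) lam :=
    (Real.hasDerivAt_sqrt hl.ne').const_add 1
  have hlogr : HasDerivAt (fun m : ℝ => Real.log (1 + Real.sqrt m))
      (1 / (2 * Real.sqrt lam * (1 + Real.sqrt lam))) lam := by
    have h := hsq.log (by positivity)
    convert h using 1
    field_simp
  have h1 := hlogr.ofReal_comp
  have h2 := tsum_dterm_hasDerivAt hl
  have h := (h1.sub_const (2 * deriv riemannZeta 0)).sub (h2.const_mul 2)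
  have hfun : (fun m : ℝ => ((Real.log (1 + Real.sqrt m) : ℝ) : ℂ) -
      2 * deriv riemannZeta 0 - 2 * ∑' k : ℕ, ((dterm m k : ℝ) : ℂ)) = Gex := rfl
  have h : HasDerivAt Gex _ lam := h
  convert h using 1
  have hS : Summable (fun k : ℕ => 1 / (lam + ((k : ℝ) + 1) ^ 2)) := summable_one_div_sq hl
  have e1 : ∑' k : ℕ, ((-(1 / (2 * (lam + ((k : ℝ) + 1) ^ 2))) : ℝ) : ℂ) =
      ((∑' k : ℕ, -(1 / (2 * (lam + ((k : ℝ) + 1) ^ 2))) : ℝ) : ℂ) :=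
    (Complex.ofReal_tsum _).symm
  have e2 : (∑' k : ℕ, -(1 / (2 * (lam + ((k : ℝ) + 1) ^ 2))) : ℝ) =
      -(1 / 2) * ∑' k : ℕ, 1 / (lam + ((k : ℝ) + 1) ^ 2) := by
    rw [← tsum_mul_left]
    apply tsum_congr
    intro k
    have : (0:ℝ) < lam + ((k : ℝ) + 1) ^ 2 := by positivity
    field_simp
  rw [e1, e2]
  push_cast
  try ring

end DNZeta

theorem DN_zeta_determinant_derivative :
    (∀ lam : ℝ, 0 < lam → ∀ s : ℂ, 1 < s.re →
      Summable (fun k : ℕ => ‖((lam + ((k : ℝ) + 1) ^ 2 : ℝ) : ℂ) ^ (-s / 2)‖)) ∧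
    ∃ F : ℝ → ℂ → ℂ,
      (∀ lam : ℝ, 0 < lam → ∃ ε : ℝ, 0 < ε ∧
        DifferentiableOn ℂ (F lam) ({s : ℂ | -ε < s.re} \ {1}) ∧
        ∀ s : ℂ, 1 < s.re →
          F lam s = ((1 + Real.sqrt lam : ℝ) : ℂ) ^ (-s) +
            2 * ∑' k : ℕ, ((lam + ((k : ℝ) + 1) ^ 2 : ℝ) : ℂ) ^ (-s / 2)) ∧
      ∀ lam : ℝ, 0 < lam →
        HasDerivAt (fun m : ℝ => -(deriv (F m) 0))
          (((1 / (2 * Real.sqrt lam * (1 + Real.sqrt lam)) +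
            ∑' k : ℕ, 1 / (lam + ((k : ℝ) + 1) ^ 2) : ℝ)) : ℂ) lam := by
  refine ⟨fun lam hl s hs => DNZeta.summable_norm_cpowA hl hs, DNZeta.Fz, ?_, ?_⟩
  · intro lam hl
    refine ⟨1 / 2, by norm_num, ?_, fun s hs => DNZeta.Fz_eq_series hl hs⟩
    exact DNZeta.Fz_differentiableOn hl
  · intro lam hl
    apply (DNZeta.Gex_hasDerivAt hl).congr_of_eventuallyEq
    filter_upwards [Ioi_mem_nhds hl] with m hm
    rw [Set.mem_Ioi] at hm
    rw [DNZeta.Fz_deriv_zero hm]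
    unfold DNZeta.Gex
    ring
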